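/- arXiv:2605.21202 — 3 statements merged into one kernel-verified Lean document; each statement's English description precedes it below -/
import Mathlib

section
/- Let u : [t1,t2] × [0,π] → ℝ^N be a C² map with ∂_t u · ∂_θ u = 0 on [t1,t2] × {0,π}, and let τ(u) = ∂_t² u + ∂_θ² u. Then the quantity F(t) := (1/2) ∫_0^π (|∂_t u|² - |∂_θ u|²)(t,θ) dθ - ∫_0^t ∫_0^π τ(u) · ∂_t u dθ ds is constant in t on [t1,t2] (assuming 0 ∈ [t1,t2]). -/
open MeasureTheory Real Set


open MeasureTheory Real Set Filter Topology RealInnerProductSpace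

variable {E : Type*} [NormedAddCommGroup E] [InnerProductSpace ℝ E] [CompleteSpace E]

lemma contParam (q : ℝ → ℝ → ℝ) (hq : Continuous fun p : ℝ × ℝ => q p.1 p.2) :
    Continuous fun t => ∫ θ in (0:ℝ)..π, q t θ :=
  intervalIntegral.continuous_parametric_intervalIntegral_of_continuous' (f := q) hq 0 π

lemma slope_rep (f f' : ℝ → ℝ → E)
    (hd : ∀ s θ, HasDerivAt (fun s => f s θ) (f' s θ) s)
    (hc : Continuous fun p : ℝ × ℝ => f' p.1 p.2)
    (t t' θ : ℝ) :
    f t' θ - f t θ = (t' - t) • ∫ r in (0:ℝ)..1, f' ((t' - t) * r + t) θ := by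
  have hint : IntervalIntegrable (fun s => f' s θ) volume t t' :=
    (hc.comp (continuous_id.prodMk continuous_const)).intervalIntegrable _ _
  have h1 : ∫ s in t..t', f' s θ = f t' θ - f t θ :=
    intervalIntegral.integral_eq_sub_of_hasDerivAt (fun s _ => hd s θ) hint
  have h2 := intervalIntegral.smul_integral_comp_mul_add (a := (0:ℝ)) (b := 1)
      (f := fun s => f' s θ) (t' - t) t
  rw [mul_zero, zero_add, mul_one, sub_add_cancel] at h2
  rw [h2, h1]

lemma keyLim (f f' g : ℝ → ℝ → E)
    (hd : ∀ s θ, HasDerivAt (fun s => f s θ) (f' s θ) s)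
    (hcf' : Continuous fun p : ℝ × ℝ => f' p.1 p.2)
    (hcg : Continuous fun p : ℝ × ℝ => g p.1 p.2)
    (t : ℝ) :
    Tendsto (fun t' => (t' - t)⁻¹ * ∫ θ in (0:ℝ)..π, ⟪g t' θ, f t' θ - f t θ⟫)
      (𝓝[≠] t) (𝓝 (∫ θ in (0:ℝ)..π, ⟪g t θ, f' t θ⟫)) := by
  set S : ℝ → ℝ → E := fun t' θ => ∫ r in (0:ℝ)..1, f' ((t' - t) * r + t) θ with hS
  have hSc : Continuous fun p : ℝ × ℝ => S p.1 p.2 := by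
    apply intervalIntegral.continuous_parametric_intervalIntegral_of_continuous'
      (f := fun (p : ℝ × ℝ) r => f' ((p.1 - t) * r + t) p.2)
    have : Continuous fun q : (ℝ × ℝ) × ℝ => ((q.1.1 - t) * q.2 + t, q.1.2) := by fun_prop
    exact hcf'.comp this
  have hq : Continuous fun p : ℝ × ℝ => (⟪g p.1 p.2, S p.1 p.2⟫ : ℝ) := hcg.inner hSc
  have hmain : Tendsto (fun t' => ∫ θ in (0:ℝ)..π, ⟪g t' θ, S t' θ⟫) (𝓝 t)
      (𝓝 (∫ θ in (0:ℝ)..π, ⟪g t θ, S t θ⟫)) :=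
    (contParam _ hq).tendsto t
  have hSt : ∀ θ, S t θ = f' t θ := by
    intro θ
    simp [hS]
  have hval : (∫ θ in (0:ℝ)..π, (⟪g t θ, f' t θ⟫ : ℝ))
      = ∫ θ in (0:ℝ)..π, ⟪g t θ, S t θ⟫ :=
    intervalIntegral.integral_congr fun θ _ => by rw [hSt]
  rw [hval]
  refine Tendsto.congr' ?_ (hmain.mono_left nhdsWithin_le_nhds)
  filter_upwards [self_mem_nhdsWithin] with t' ht'
  have hne : t' - t ≠ 0 := sub_ne_zero.2 ht'
  have hpt : ∀ θ, (⟪g t' θ, f t' θ - f t θ⟫ : ℝ) = (t' - t) * ⟪g t' θ, S t' θ⟫ := by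
    intro θ
    rw [slope_rep f f' hd hcf' t t' θ, real_inner_smul_right]
  rw [intervalIntegral.integral_congr (g := fun θ => (t' - t) * ⟪g t' θ, S t' θ⟫)
      (fun θ _ => hpt θ), intervalIntegral.integral_const_mul, ← mul_assoc,
    inv_mul_cancel₀ hne, one_mul]

omit [CompleteSpace E] in
lemma inner_add_sub (x y : E) : (⟪x + y, x - y⟫ : ℝ) = ‖x‖^2 - ‖y‖^2 := by
  rw [inner_sub_right, inner_add_left, inner_add_left, real_inner_self_eq_norm_sq,
    real_inner_self_eq_norm_sq, real_inner_comm y x]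
  ring

lemma hasDeriv_sq (f f' : ℝ → ℝ → E)
    (hd : ∀ s θ, HasDerivAt (fun s => f s θ) (f' s θ) s)
    (hcf : Continuous fun p : ℝ × ℝ => f p.1 p.2)
    (hcf' : Continuous fun p : ℝ × ℝ => f' p.1 p.2) (t : ℝ) :
    HasDerivAt (fun s => ∫ θ in (0:ℝ)..π, ‖f s θ‖^2)
      (∫ θ in (0:ℝ)..π, ⟪f t θ + f t θ, f' t θ⟫) t := by
  rw [hasDerivAt_iff_tendsto_slope]
  have hkey := keyLim f f' (fun t' θ => f t' θ + f t θ) hd hcf'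
      (hcf.add (hcf.comp (continuous_const.prodMk continuous_snd))) t
  refine Tendsto.congr' ?_ hkey
  filter_upwards [self_mem_nhdsWithin] with t' ht'
  have hint : ∀ s, IntervalIntegrable (fun θ => ‖f s θ‖^2) volume 0 π := fun s =>
    ((hcf.comp (continuous_const.prodMk continuous_id)).norm.pow 2).intervalIntegrable _ _
  have hdiff : (∫ θ in (0:ℝ)..π, ⟪f t' θ + f t θ, f t' θ - f t θ⟫)
      = (∫ θ in (0:ℝ)..π, ‖f t' θ‖^2) - ∫ θ in (0:ℝ)..π, ‖f t θ‖^2 := by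
    rw [← intervalIntegral.integral_sub (hint t') (hint t)]
    exact intervalIntegral.integral_congr fun θ _ => inner_add_sub _ _
  rw [hdiff, slope_def_field, div_eq_inv_mul]

lemma hasDeriv_sq_theta (u ut uθ uθθ : ℝ → ℝ → E)
    (hut : ∀ t θ, HasDerivAt (fun s => u s θ) (ut t θ) t)
    (huθ : ∀ t θ, HasDerivAt (fun φ => u t φ) (uθ t θ) θ)
    (huθθ : ∀ t θ, HasDerivAt (fun φ => uθ t φ) (uθθ t θ) θ)
    (hc1 : Continuous fun p : ℝ × ℝ => ut p.1 p.2)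
    (hc2 : Continuous fun p : ℝ × ℝ => uθ p.1 p.2)
    (hc4 : Continuous fun p : ℝ × ℝ => uθθ p.1 p.2) (t : ℝ) :
    HasDerivAt (fun s => ∫ θ in (0:ℝ)..π, ‖uθ s θ‖^2)
      ((⟪uθ t π + uθ t π, ut t π⟫ - ⟪uθ t 0 + uθ t 0, ut t 0⟫)
        - ∫ θ in (0:ℝ)..π, ⟪uθθ t θ + uθθ t θ, ut t θ⟫) t := by
  rw [hasDerivAt_iff_tendsto_slope]
  have hbnd : ∀ θ₀ : ℝ, Tendsto
      (fun t' => (t' - t)⁻¹ * ⟪uθ t' θ₀ + uθ t θ₀, u t' θ₀ - u t θ₀⟫)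
      (𝓝[≠] t) (𝓝 (⟪uθ t θ₀ + uθ t θ₀, ut t θ₀⟫)) := by
    intro θ₀
    have hcont : Continuous fun t' => uθ t' θ₀ + uθ t θ₀ :=
      (hc2.comp (continuous_id.prodMk continuous_const)).add continuous_const
    have h1 : Tendsto (fun t' => uθ t' θ₀ + uθ t θ₀) (𝓝[≠] t)
        (𝓝 (uθ t θ₀ + uθ t θ₀)) := (hcont.tendsto t).mono_left nhdsWithin_le_nhds
    have h2 : Tendsto (slope (fun s => u s θ₀) t) (𝓝[≠] t) (𝓝 (ut t θ₀)) :=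
      hasDerivAt_iff_tendsto_slope.1 (hut t θ₀)
    refine (h1.inner h2).congr fun t' => ?_
    simp [slope, real_inner_smul_right, mul_comm]
  have hkey := keyLim u ut (fun t' θ => uθθ t' θ + uθθ t θ) hut hc1
    (hc4.add (hc4.comp (continuous_const.prodMk continuous_snd))) t
  refine Tendsto.congr' ?_ (((hbnd π).sub (hbnd 0)).sub hkey)
  filter_upwards [self_mem_nhdsWithin] with t' ht'
  -- integration by parts in θ at fixed t' ≠ t
  have hcuθ : ∀ s, Continuous fun θ => uθ s θ := fun s =>
    hc2.comp (continuous_const.prodMk continuous_id)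
  have hcuθθ : ∀ s, Continuous fun θ => uθθ s θ := fun s =>
    hc4.comp (continuous_const.prodMk continuous_id)
  have hcu : ∀ s, Continuous fun θ => u s θ := fun s =>
    continuous_iff_continuousAt.2 fun θ => (huθ s θ).continuousAt
  have hW : ∀ θ : ℝ, HasDerivAt (fun φ => (⟪uθ t' φ + uθ t φ, u t' φ - u t φ⟫ : ℝ))
      (⟪uθ t' θ + uθ t θ, uθ t' θ - uθ t θ⟫ + ⟪uθθ t' θ + uθθ t θ, u t' θ - u t θ⟫) θ :=
    fun θ => HasDerivAt.inner ℝ ((huθθ t' θ).add (huθθ t θ)) ((huθ t' θ).sub (huθ t θ))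
  have hintB : IntervalIntegrable
      (fun θ => (⟪uθ t' θ + uθ t θ, uθ t' θ - uθ t θ⟫ : ℝ)) volume 0 π :=
    (((hcuθ t').add (hcuθ t)).inner ((hcuθ t').sub (hcuθ t))).intervalIntegrable _ _
  have hintA : IntervalIntegrable
      (fun θ => (⟪uθθ t' θ + uθθ t θ, u t' θ - u t θ⟫ : ℝ)) volume 0 π :=
    (((hcuθθ t').add (hcuθθ t)).inner ((hcu t').sub (hcu t))).intervalIntegrable _ _
  have hftc : (∫ θ in (0:ℝ)..π, (⟪uθ t' θ + uθ t θ, uθ t' θ - uθ t θ⟫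
        + ⟪uθθ t' θ + uθθ t θ, u t' θ - u t θ⟫ : ℝ))
      = ⟪uθ t' π + uθ t π, u t' π - u t π⟫ - ⟪uθ t' 0 + uθ t 0, u t' 0 - u t 0⟫ :=
    intervalIntegral.integral_eq_sub_of_hasDerivAt (fun θ _ => hW θ) (hintB.add hintA)
  rw [intervalIntegral.integral_add hintB hintA] at hftc
  have hsq : ∀ s, IntervalIntegrable (fun θ => ‖uθ s θ‖^2) volume 0 π := fun s =>
    ((hcuθ s).norm.pow 2).intervalIntegrable _ _
  have hB : (∫ θ in (0:ℝ)..π, (⟪uθ t' θ + uθ t θ, uθ t' θ - uθ t θ⟫ : ℝ))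
      = (∫ θ in (0:ℝ)..π, ‖uθ t' θ‖^2) - ∫ θ in (0:ℝ)..π, ‖uθ t θ‖^2 := by
    rw [← intervalIntegral.integral_sub (hsq t') (hsq t)]
    exact intervalIntegral.integral_congr fun θ _ => inner_add_sub _ _
  rw [hB] at hftc
  have hdiff : (∫ θ in (0:ℝ)..π, ‖uθ t' θ‖^2) - ∫ θ in (0:ℝ)..π, ‖uθ t θ‖^2
      = (⟪uθ t' π + uθ t π, u t' π - u t π⟫ - ⟪uθ t' 0 + uθ t 0, u t' 0 - u t 0⟫)
        - ∫ θ in (0:ℝ)..π, (⟪uθθ t' θ + uθθ t θ, u t' θ - u t θ⟫ : ℝ) := by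
    linarith [hftc]
  show _ = slope (fun s => ∫ θ in (0:ℝ)..π, ‖uθ s θ‖^2) t t'
  rw [slope_def_field, hdiff]
  ring

/-- The Pohozaev-type quantity
`F(t) = (1/2)∫₀^π (|∂ₜu|² - |∂_θu|²)(t,θ)dθ - ∫₀^t ∫₀^π τ(u)·∂ₜu dθ ds`
is constant in `t` for a C² map on `[t1,t2] × [0,π]` with free boundary
orthogonality on `θ ∈ {0, π}` (assuming `0 ∈ [t1,t2]`). -/
theorem stmt_1 (N : ℕ) (t1 t2 : ℝ) (ht : t1 ≤ t2) (h01 : t1 ≤ 0) (h02 : 0 ≤ t2)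
    (u ut uθ utt uθθ : ℝ → ℝ → EuclideanSpace ℝ (Fin N))
    (hut : ∀ t θ, HasDerivAt (fun s => u s θ) (ut t θ) t)
    (huθ : ∀ t θ, HasDerivAt (fun φ => u t φ) (uθ t θ) θ)
    (hutt : ∀ t θ, HasDerivAt (fun s => ut s θ) (utt t θ) t)
    (huθθ : ∀ t θ, HasDerivAt (fun φ => uθ t φ) (uθθ t θ) θ)
    (hc1 : Continuous fun p : ℝ × ℝ => ut p.1 p.2)
    (hc2 : Continuous fun p : ℝ × ℝ => uθ p.1 p.2)
    (hc3 : Continuous fun p : ℝ × ℝ => utt p.1 p.2)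
    (hc4 : Continuous fun p : ℝ × ℝ => uθθ p.1 p.2)
    (hbd : ∀ t ∈ Set.Icc t1 t2,
      (inner ℝ (ut t 0) (uθ t 0) : ℝ) = 0 ∧ (inner ℝ (ut t π) (uθ t π) : ℝ) = 0)
    (F : ℝ → ℝ)
    (hF : ∀ t, F t = (1/2) * (∫ θ in (0:ℝ)..π, (‖ut t θ‖^2 - ‖uθ t θ‖^2))
      - ∫ s in (0:ℝ)..t, ∫ θ in (0:ℝ)..π, (inner ℝ (utt s θ + uθθ s θ) (ut s θ) : ℝ)) :
    ∀ s ∈ Set.Icc t1 t2, ∀ t ∈ Set.Icc t1 t2, F s = F t := by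
  have hIc : Continuous fun r => ∫ θ in (0:ℝ)..π, (inner ℝ (utt r θ + uθθ r θ) (ut r θ) : ℝ) :=
    contParam _ ((hc3.add hc4).inner hc1)
  have hK : ∀ x : ℝ, HasDerivAt
      (fun r => ∫ s in (0:ℝ)..r, ∫ θ in (0:ℝ)..π, (inner ℝ (utt s θ + uθθ s θ) (ut s θ) : ℝ))
      (∫ θ in (0:ℝ)..π, (inner ℝ (utt x θ + uθθ x θ) (ut x θ) : ℝ)) x := fun x =>
    (hIc.integral_hasStrictDerivAt 0 x).hasDerivAt
  have hH := hasDeriv_sq ut utt hutt hc1 hc3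
  have hG := hasDeriv_sq_theta u ut uθ uθθ hut huθ huθθ hc1 hc2 hc4
  have hcut : ∀ x, Continuous fun θ => ut x θ := fun x =>
    hc1.comp (continuous_const.prodMk continuous_id)
  have hcuθ : ∀ x, Continuous fun θ => uθ x θ := fun x =>
    hc2.comp (continuous_const.prodMk continuous_id)
  have hcutt : ∀ x, Continuous fun θ => utt x θ := fun x =>
    hc3.comp (continuous_const.prodMk continuous_id)
  have hcuθθ : ∀ x, Continuous fun θ => uθθ x θ := fun x =>
    hc4.comp (continuous_const.prodMk continuous_id)
  have hFrep : F = fun x => (1/2) * ((∫ θ in (0:ℝ)..π, ‖ut x θ‖^2)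
      - ∫ θ in (0:ℝ)..π, ‖uθ x θ‖^2)
      - ∫ s in (0:ℝ)..x, ∫ θ in (0:ℝ)..π, (inner ℝ (utt s θ + uθθ s θ) (ut s θ) : ℝ) := by
    funext x
    rw [hF x, intervalIntegral.integral_sub (f := fun θ => ‖ut x θ‖^2) (g := fun θ => ‖uθ x θ‖^2) (((hcut x).norm.pow 2).intervalIntegrable _ _)
      (((hcuθ x).norm.pow 2).intervalIntegrable _ _)]
  have hFd : ∀ x ∈ Set.Icc t1 t2, HasDerivAt F 0 x := by
    intro x hx
    rw [hFrep]
    have hder := (((hH x).sub (hG x)).const_mul ((1:ℝ)/2)).sub (hK x)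
    refine hder.congr_deriv ?_
    obtain ⟨hb0, hbπ⟩ := hbd x hx
    rw [real_inner_comm] at hb0 hbπ
    have hbπ' : (inner ℝ (uθ x π + uθ x π) (ut x π) : ℝ) = 0 := by
      rw [inner_add_left, hbπ, add_zero]
    have hb0' : (inner ℝ (uθ x 0 + uθ x 0) (ut x 0) : ℝ) = 0 := by
      rw [inner_add_left, hb0, add_zero]
    rw [hbπ', hb0']
    have hA : (∫ θ in (0:ℝ)..π, (inner ℝ (ut x θ + ut x θ) (utt x θ) : ℝ))
        = 2 * ∫ θ in (0:ℝ)..π, (inner ℝ (utt x θ) (ut x θ) : ℝ) := by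
      rw [← intervalIntegral.integral_const_mul]
      exact intervalIntegral.integral_congr fun θ _ => by
        rw [inner_add_left, real_inner_comm]; ring
    have hB : (∫ θ in (0:ℝ)..π, (inner ℝ (uθθ x θ + uθθ x θ) (ut x θ) : ℝ))
        = 2 * ∫ θ in (0:ℝ)..π, (inner ℝ (uθθ x θ) (ut x θ) : ℝ) := by
      rw [← intervalIntegral.integral_const_mul]
      exact intervalIntegral.integral_congr fun θ _ => by
        rw [inner_add_left]; ring
    have hIx : (∫ θ in (0:ℝ)..π, (inner ℝ (utt x θ + uθθ x θ) (ut x θ) : ℝ))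
        = (∫ θ in (0:ℝ)..π, (inner ℝ (utt x θ) (ut x θ) : ℝ))
          + ∫ θ in (0:ℝ)..π, (inner ℝ (uθθ x θ) (ut x θ) : ℝ) := by
      rw [← intervalIntegral.integral_add (((hcutt x).inner (hcut x)).intervalIntegrable _ _)
        (((hcuθθ x).inner (hcut x)).intervalIntegrable _ _)]
      exact intervalIntegral.integral_congr fun θ _ => by rw [inner_add_left]
    rw [hA, hB, hIx]
    ring
  have hcont : ContinuousOn F (Set.Icc t1 t2) := fun x hx =>
    ((hFd x hx).continuousAt).continuousWithinAt
  have hconst := constant_of_has_deriv_right_zero hcont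
    (fun x hx => (hFd x (Set.Ico_subset_Icc_self hx)).hasDerivWithinAt)
  intro s hs t htt
  rw [hconst s hs, hconst t htt]
end

section
/- Let r ∈ (0, 1/2), C > 0, and let E : [T₀, ∞) → (0, ∞) be C¹ with (d/dt)(1/E(t)) ≥ 1 - C t^{-2r} for all t ≥ T₀. Then there exist constants C' > 0 and T₁ ≥ T₀ such that E(t) ≤ 1/t + C'/t^{1+2r} for all t ≥ T₁. -/
open Real Set

/-- Refined energy decay: if `(d/dt)(1/E) ≥ 1 - C t^{-2r}` on `[T₀,∞)` with
`r ∈ (0,1/2)`, then `E(t) ≤ 1/t + C'/t^{1+2r}` for all large `t`. -/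
theorem stmt_7 (r C T₀ : ℝ) (hr : 0 < r ∧ r < 1/2) (hC : 0 < C) (hT₀ : 0 < T₀)
    (E G : ℝ → ℝ)
    (hpos : ∀ t, T₀ ≤ t → 0 < E t)
    (hderiv : ∀ t, T₀ ≤ t → HasDerivAt (fun s => (E s)⁻¹) (G t) t)
    (hcont : ContinuousOn G (Set.Ici T₀))
    (hineq : ∀ t, T₀ ≤ t → 1 - C * t ^ (-(2 * r)) ≤ G t) :
    ∃ C' : ℝ, 0 < C' ∧ ∃ T₁ : ℝ, T₀ ≤ T₁ ∧
      ∀ t, T₁ ≤ t → E t ≤ 1 / t + C' / t ^ (1 + 2 * r) := by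
  obtain ⟨hr0, hr2⟩ := hr
  have h2r : 0 < 1 - 2 * r := by linarith
  set A : ℝ := C / (1 - 2 * r) with hA_def
  have hA : 0 < A := div_pos hC h2r
  -- the comparison function φ t = t - A t^(1-2r)
  set φ : ℝ → ℝ := fun s => s - A * s ^ (1 - 2 * r) with hφ_def
  have hφderiv : ∀ t : ℝ, 0 < t → HasDerivAt φ (1 - C * t ^ (-(2 * r))) t := by
    intro t ht
    have h1 : HasDerivAt (fun s : ℝ => s ^ (1 - 2 * r))
        ((1 - 2 * r) * t ^ (1 - 2 * r - 1)) t :=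
      Real.hasDerivAt_rpow_const (Or.inl ht.ne')
    have h2 : HasDerivAt φ (1 - A * ((1 - 2 * r) * t ^ (1 - 2 * r - 1))) t :=
      (hasDerivAt_id t).sub (h1.const_mul A)
    convert h2 using 1
    have hAC : A * (1 - 2 * r) = C := by rw [hA_def]; field_simp
    have he : (1 - 2 * r - 1 : ℝ) = -(2 * r) := by ring
    rw [he, ← mul_assoc, hAC]
  -- h = 1/E - φ is monotone on [T₀, ∞)
  set h : ℝ → ℝ := fun s => (E s)⁻¹ - φ s with hh_def
  have hhderiv : ∀ t, T₀ ≤ t → HasDerivAt h (G t - (1 - C * t ^ (-(2 * r)))) t := by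
    intro t ht
    exact (hderiv t ht).sub (hφderiv t (lt_of_lt_of_le hT₀ ht))
  have hmono : MonotoneOn h (Set.Ici T₀) := by
    apply monotoneOn_of_deriv_nonneg (convex_Ici T₀)
    · intro t ht
      exact (hhderiv t ht).continuousAt.continuousWithinAt
    · intro t ht
      rw [interior_Ici] at ht
      exact ((hhderiv t (le_of_lt ht)).differentiableAt).differentiableWithinAt
    · intro t ht
      rw [interior_Ici] at ht
      rw [(hhderiv t (le_of_lt ht)).deriv]
      have := hineq t (le_of_lt ht)
      linarith
  set B : ℝ := max 1 (-(h T₀)) with hB_def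
  have hB1 : (1 : ℝ) ≤ B := le_max_left _ _
  have hB0 : 0 < B := lt_of_lt_of_le one_pos hB1
  have hBh : -(h T₀) ≤ B := le_max_right _ _
  -- key lower bound: (E t)⁻¹ ≥ t - A t^(1-2r) - B for t ≥ T₀
  have hkey : ∀ t, T₀ ≤ t → t - A * t ^ (1 - 2 * r) - B ≤ (E t)⁻¹ := by
    intro t ht
    have := hmono (self_mem_Ici) (mem_Ici.mpr ht) ht
    simp only [hh_def, hφ_def] at this
    have hBh' : -((E T₀)⁻¹ - (T₀ - A * T₀ ^ (1 - 2 * r))) ≤ B := hBh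
    linarith
  refine ⟨2 * (A + B), by positivity, max T₀ (max ((4 * A) ^ (2 * r)⁻¹) (4 * B)), le_max_left _ _, ?_⟩
  intro t ht
  have htT₀ : T₀ ≤ t := le_trans (le_max_left _ _) ht
  have ht4B : 4 * B ≤ t := le_trans (le_trans (le_max_right _ _) (le_max_right _ _)) ht
  have ht1 : (1 : ℝ) ≤ t := by linarith
  have ht0 : (0 : ℝ) < t := by linarith
  have htA : (4 * A) ^ (2 * r)⁻¹ ≤ t :=
    le_trans (le_trans (le_max_left _ _) (le_max_right _ _)) ht
  set u : ℝ := t ^ (2 * r) with hu_def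
  set v : ℝ := t ^ (1 - 2 * r) with hv_def
  have hu0 : 0 < u := Real.rpow_pos_of_pos ht0 _
  have hv0 : 0 < v := Real.rpow_pos_of_pos ht0 _
  have huv : u * v = t := by
    rw [hu_def, hv_def, ← Real.rpow_add ht0]
    norm_num
  have hv1 : (1 : ℝ) ≤ v := Real.one_le_rpow ht1 (le_of_lt h2r)
  have hu_le : u ≤ t := by
    calc u = t ^ (2 * r) := rfl
    _ ≤ t ^ (1 : ℝ) := Real.rpow_le_rpow_of_exponent_le ht1 (by linarith)
    _ = t := Real.rpow_one t
  have h4Au : 4 * A ≤ u := by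
    calc 4 * A = ((4 * A) ^ (2 * r)⁻¹) ^ (2 * r) :=
          (Real.rpow_inv_rpow (by positivity) (by positivity)).symm
    _ ≤ t ^ (2 * r) := Real.rpow_le_rpow (by positivity) htA (by positivity)
  -- A*v ≤ t/4
  have hAv : A * v ≤ t / 4 := by
    nlinarith [mul_le_mul_of_nonneg_right h4Au (le_of_lt hv0)]
  set P : ℝ := t - A * v - B with hP_def
  have hPt : t / 2 ≤ P := by
    have : B ≤ t / 4 := by linarith
    simp only [hP_def]; linarith
  have hP0 : 0 < P := by linarith
  have hEt : E t ≤ P⁻¹ := by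
    have h1 : P ≤ (E t)⁻¹ := hkey t htT₀
    have h2 := (hpos t htT₀)
    calc E t = ((E t)⁻¹)⁻¹ := (inv_inv _).symm
    _ ≤ P⁻¹ := by
        apply inv_anti₀ hP0 h1
  have hexp : t ^ (1 + 2 * r) = t * u := by
    rw [hu_def, Real.rpow_add ht0, Real.rpow_one]
  rw [hexp]
  refine le_trans hEt ?_
  rw [div_add_div _ _ (ne_of_gt ht0) (by positivity), inv_eq_one_div,
    div_le_div_iff₀ hP0 (by positivity)]
  have key : 2 * (A * v + B) * u ≤ 2 * (A + B) * t := by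
    have h1 : 2 * A * (u * v) = 2 * A * t := by rw [huv]
    nlinarith [mul_le_mul_of_nonneg_left hu_le (by linarith : (0:ℝ) ≤ 2 * B)]
  have ha0 : 0 ≤ A * v + B := by positivity
  have h2Pt : 0 ≤ 2 * P - t := by linarith
  nlinarith [mul_le_mul_of_nonneg_right key hP0.le,
    mul_nonneg (mul_nonneg hu0.le ha0) h2Pt, mul_pos ht0 hu0]
end

section
/- Let u : Q → ℝ^N be C¹ on Q = [−T, T] × [0,π] with T ≥ 1, and let α := ∫_0^π (|∂_t u|² − |∂_θ u|²)(t₀,θ) dθ − 2∫∫_{[0,t₀]×[0,π]} τ · ∂_t u dt dθ be independent of t₀ ∈ [−T,T] (given). Then |α| ≤ (2/T) E(u) + 2 ‖τ‖_{L²(Q)} √(2E(u)), where E(u) = (1/2)∫_Q |∇u|² and τ ∈ L²(Q, ℝ^N). -/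
open MeasureTheory Real Set

/-- If `|f| ≤ g` pointwise on `[a,b]` and `g` is integrable, then
`|∫ f| ≤ ∫ g` (even without integrability of `f`, by junk-value convention). -/
lemma aux_abs_int_13 {f g : ℝ → ℝ} {a b : ℝ} (hab : a ≤ b)
    (hg : IntervalIntegrable g volume a b) (h0 : ∀ x ∈ Set.Icc a b, |f x| ≤ g x) :
    |∫ x in a..b, f x| ≤ ∫ x in a..b, g x := by
  by_cases hf : IntervalIntegrable f volume a b
  · calc |∫ x in a..b, f x| ≤ ∫ x in a..b, |f x| :=
        intervalIntegral.abs_integral_le_integral_abs hab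
      _ ≤ ∫ x in a..b, g x :=
        intervalIntegral.integral_mono_on hab hf.abs hg h0
  · rw [intervalIntegral.integral_undef hf, abs_zero]
    exact intervalIntegral.integral_nonneg hab fun x hx => (abs_nonneg _).trans (h0 x hx)

/-- Integral of a nonnegative function over a subinterval is bounded by that over the
whole interval. -/
lemma aux_sub_int_13 {F : ℝ → ℝ} {A B a b : ℝ} (h1 : A ≤ a) (h2 : a ≤ b) (h3 : b ≤ B)
    (hF : IntervalIntegrable F volume A B) (h0 : ∀ x, 0 ≤ F x) :
    ∫ x in a..b, F x ≤ ∫ x in A..B, F x := by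
  have hsub : ∀ c d : ℝ, A ≤ c → c ≤ d → d ≤ B → IntervalIntegrable F volume c d := by
    intro c d hc hcd hd
    refine hF.mono_set ?_
    rw [Set.uIcc_of_le hcd, Set.uIcc_of_le (by linarith)]
    exact Set.Icc_subset_Icc hc hd
  have i1 := hsub A a le_rfl h1 (by linarith)
  have i2 := hsub a b (by linarith) h2 h3
  have i3 := hsub b B (by linarith) (by linarith) le_rfl
  have e1 : (∫ x in a..b, F x) + ∫ x in b..B, F x = ∫ x in a..B, F x :=
    intervalIntegral.integral_add_adjacent_intervals i2 i3
  have e2 : (∫ x in A..a, F x) + ∫ x in a..B, F x = ∫ x in A..B, F x :=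
    intervalIntegral.integral_add_adjacent_intervals i1 (i2.trans i3)
  have n1 : 0 ≤ ∫ x in A..a, F x := intervalIntegral.integral_nonneg h1 fun x _ => h0 x
  have n3 : 0 ≤ ∫ x in b..B, F x := intervalIntegral.integral_nonneg h3 fun x _ => h0 x
  linarith

/-- Optimization over the Young-inequality parameter. -/
lemma aux_opt_13 {x A B : ℝ} (hA : 0 ≤ A) (hB : 0 ≤ B)
    (h : ∀ r : ℝ, 0 < r → x ≤ r * A + B / r) : x ≤ 2 * Real.sqrt A * Real.sqrt B := by
  have hrs : 0 ≤ 2 * Real.sqrt A * Real.sqrt B := by positivity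
  rcases eq_or_lt_of_le hA with hA0 | hA0
  · -- A = 0
    by_contra hc
    push_neg at hc
    have hx : 0 < x := lt_of_le_of_lt hrs hc
    have hr : 0 < (B + 1) / x := by positivity
    have h1 := h _ hr
    rw [← hA0, mul_zero, zero_add, div_div_eq_mul_div] at h1
    have h2 : x * (B + 1) ≤ B * x := (le_div_iff₀ (by positivity)).mp h1
    nlinarith
  · rcases eq_or_lt_of_le hB with hB0 | hB0
    · -- B = 0
      by_contra hc
      push_neg at hc
      have hx : 0 < x := lt_of_le_of_lt hrs hc
      have hr : 0 < x / (2 * A) := by positivity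
      have h1 := h _ hr
      rw [← hB0] at h1
      have hz : (0:ℝ) / (x / (2 * A)) = 0 := zero_div _
      have key : x / (2 * A) * A = x / 2 := by field_simp
      linarith [h1, hz, key]
    · -- A > 0, B > 0
      have hsA : 0 < Real.sqrt A := Real.sqrt_pos.mpr hA0
      have hsB : 0 < Real.sqrt B := Real.sqrt_pos.mpr hB0
      have hr : 0 < Real.sqrt B / Real.sqrt A := by positivity
      have key := h _ hr
      have e1 : Real.sqrt B / Real.sqrt A * A = Real.sqrt B * Real.sqrt A := by
        rw [div_mul_eq_mul_div, mul_div_assoc, Real.div_sqrt]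
      have e2 : B / (Real.sqrt B / Real.sqrt A) = Real.sqrt B * Real.sqrt A := by
        rw [div_div_eq_mul_div, mul_comm, mul_div_assoc, Real.div_sqrt, mul_comm]
      rw [e1, e2] at key
      linarith

/-- Bound on the Pohozaev-type constant: if `α` is independent of the time slice on
`Q = [-T,T] × [0,π]`, then `|α| ≤ (2/T) E(u) + 2 ‖τ‖_{L²(Q)} √(2E(u))`. -/
theorem stmt_13 (N : ℕ) (T : ℝ) (hT : 1 ≤ T)
    (u ut uθ τ : ℝ → ℝ → EuclideanSpace ℝ (Fin N))
    (hut : ∀ t θ, HasDerivAt (fun s => u s θ) (ut t θ) t)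
    (huθ : ∀ t θ, HasDerivAt (fun φ => u t φ) (uθ t θ) θ)
    (hc1 : Continuous fun p : ℝ × ℝ => ut p.1 p.2)
    (hc2 : Continuous fun p : ℝ × ℝ => uθ p.1 p.2)
    (hτ1 : ∀ t, IntervalIntegrable (fun θ => ‖τ t θ‖^2) volume 0 π)
    (hτ2 : IntervalIntegrable (fun t => ∫ θ in (0:ℝ)..π, ‖τ t θ‖^2) volume (-T) T)
    (hτ3 : ∀ t₀ ∈ Set.Icc (-T) T,
      IntervalIntegrable (fun t => ∫ θ in (0:ℝ)..π, (inner ℝ (τ t θ) (ut t θ) : ℝ))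
        volume 0 t₀)
    (α Eu : ℝ)
    (hEu : Eu = (1/2) * ∫ t in (-T)..T, ∫ θ in (0:ℝ)..π, (‖ut t θ‖^2 + ‖uθ t θ‖^2))
    (hα : ∀ t₀ ∈ Set.Icc (-T) T,
      α = (∫ θ in (0:ℝ)..π, (‖ut t₀ θ‖^2 - ‖uθ t₀ θ‖^2))
        - 2 * ∫ t in (0:ℝ)..t₀, ∫ θ in (0:ℝ)..π, (inner ℝ (τ t θ) (ut t θ) : ℝ)) :
    |α| ≤ (2 / T) * Eu
      + 2 * Real.sqrt (∫ t in (-T)..T, ∫ θ in (0:ℝ)..π, ‖τ t θ‖^2)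
        * Real.sqrt (2 * Eu) := by
  have hπ : (0:ℝ) ≤ π := Real.pi_pos.le
  have hT0 : (0:ℝ) < T := lt_of_lt_of_le one_pos hT
  -- slice functions
  set K : ℝ → ℝ := fun t => ∫ θ in (0:ℝ)..π, (‖ut t θ‖^2 + ‖uθ t θ‖^2) with hKdef
  set Kt : ℝ → ℝ := fun t => ∫ θ in (0:ℝ)..π, ‖ut t θ‖^2 with hKtdef
  set Kτ : ℝ → ℝ := fun t => ∫ θ in (0:ℝ)..π, ‖τ t θ‖^2 with hKτdef
  set g : ℝ → ℝ := fun t => ∫ θ in (0:ℝ)..π, (inner ℝ (τ t θ) (ut t θ) : ℝ) with hgdef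
  -- continuity of slice functions
  have hKcont : Continuous K := by
    apply intervalIntegral.continuous_parametric_intervalIntegral_of_continuous'
    exact ((hc1.norm.pow 2).add (hc2.norm.pow 2))
  have hKtcont : Continuous Kt := by
    apply intervalIntegral.continuous_parametric_intervalIntegral_of_continuous'
    exact hc1.norm.pow 2
  -- pointwise continuity in θ
  have hcθ1 : ∀ t : ℝ, Continuous fun θ => ut t θ :=
    fun t => hc1.comp (Continuous.prodMk_right t)
  have hcθ2 : ∀ t : ℝ, Continuous fun θ => uθ t θ :=
    fun t => hc2.comp (Continuous.prodMk_right t)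
  -- basic nonnegativity
  have hKnonneg : ∀ t, 0 ≤ K t :=
    fun t => intervalIntegral.integral_nonneg hπ (fun θ _ => by positivity)
  have hKτnonneg : ∀ t, 0 ≤ Kτ t :=
    fun t => intervalIntegral.integral_nonneg hπ (fun θ _ => by positivity)
  have hKint : ∀ a b : ℝ, IntervalIntegrable K volume a b :=
    fun a b => hKcont.intervalIntegrable a b
  have hKtint : ∀ a b : ℝ, IntervalIntegrable Kt volume a b :=
    fun a b => hKtcont.intervalIntegrable a b
  have h2Eu : ∫ t in (-T)..T, K t = 2*Eu := by rw [hEu]; ring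
  have h2Eu0 : 0 ≤ 2*Eu := by
    rw [← h2Eu]
    exact intervalIntegral.integral_nonneg (by linarith) fun t _ => hKnonneg t
  -- the target L² norm of τ
  set A : ℝ := ∫ t in (-T)..T, Kτ t with hAdef
  have hA0 : 0 ≤ A :=
    intervalIntegral.integral_nonneg (by linarith) fun t _ => hKτnonneg t
  -- bound on ∫₀ᵀ K
  have h0T : ∫ t in (0:ℝ)..T, K t ≤ 2*Eu := by
    rw [← h2Eu]
    exact aux_sub_int_13 (by linarith) (by linarith) le_rfl (hKint _ _) hKnonneg
  -- choose a good slice t₀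
  obtain ⟨t₀, ht₀, hKt₀⟩ : ∃ t₀ ∈ Set.Icc (0:ℝ) T, K t₀ ≤ (∫ t in (0:ℝ)..T, K t)/T := by
    by_contra hcon
    push_neg at hcon
    have hpos : 0 < ∫ t in (0:ℝ)..T, (K t - (∫ s in (0:ℝ)..T, K s)/T) := by
      apply intervalIntegral.intervalIntegral_pos_of_pos_on
      · exact (hKint 0 T).sub intervalIntegrable_const
      · intro x hx
        have := hcon x ⟨hx.1.le, hx.2.le⟩
        linarith
      · exact hT0
    rw [intervalIntegral.integral_sub (hKint 0 T) intervalIntegrable_const,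
        intervalIntegral.integral_const, smul_eq_mul] at hpos
    have he : (T - 0) * ((∫ s in (0:ℝ)..T, K s)/T) = ∫ s in (0:ℝ)..T, K s := by
      field_simp
      ring
    rw [he] at hpos
    linarith
  have ht₀' : t₀ ∈ Set.Icc (-T) T := ⟨by linarith [ht₀.1], ht₀.2⟩
  have hKt₀2 : K t₀ ≤ 2*Eu/T := by
    calc K t₀ ≤ (∫ t in (0:ℝ)..T, K t)/T := hKt₀
      _ ≤ 2*Eu/T := by gcongr
  -- bound the slice term
  have hslice : |∫ θ in (0:ℝ)..π, (‖ut t₀ θ‖^2 - ‖uθ t₀ θ‖^2)| ≤ K t₀ := by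
    apply aux_abs_int_13 hπ
      (((((hcθ1 t₀).norm.pow 2).add ((hcθ2 t₀).norm.pow 2)).intervalIntegrable 0 π))
    intro θ _
    have h1 : (0:ℝ) ≤ ‖ut t₀ θ‖^2 := sq_nonneg _
    have h2 : (0:ℝ) ≤ ‖uθ t₀ θ‖^2 := sq_nonneg _
    show |‖ut t₀ θ‖^2 - ‖uθ t₀ θ‖^2| ≤ ‖ut t₀ θ‖^2 + ‖uθ t₀ θ‖^2
    rw [abs_le]
    constructor <;> linarith
  -- the parametrized Young bound for the inner-product term
  have hgbound : ∀ r : ℝ, 0 < r → ∀ t : ℝ,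
      |g t| ≤ (r/2) * Kτ t + (1/(2*r)) * Kt t := by
    intro r hr t
    have hint1 : IntervalIntegrable (fun θ => (r/2) * ‖τ t θ‖^2) volume 0 π :=
      (hτ1 t).const_mul _
    have hint2 : IntervalIntegrable (fun θ => (1/(2*r)) * ‖ut t θ‖^2) volume 0 π :=
      (((hcθ1 t).norm.pow 2).intervalIntegrable 0 π).const_mul _
    have key : |g t| ≤ ∫ θ in (0:ℝ)..π, ((r/2) * ‖τ t θ‖^2 + (1/(2*r)) * ‖ut t θ‖^2) := by
      apply aux_abs_int_13 hπ (hint1.add hint2)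
      intro θ _
      have h1 : |(inner ℝ (τ t θ) (ut t θ) : ℝ)| ≤ ‖τ t θ‖ * ‖ut t θ‖ :=
        abs_real_inner_le_norm _ _
      have h2 : ‖τ t θ‖ * ‖ut t θ‖ ≤ (r/2) * ‖τ t θ‖^2 + (1/(2*r)) * ‖ut t θ‖^2 := by
        rw [← sub_nonneg]
        have he : (r/2) * ‖τ t θ‖^2 + (1/(2*r)) * ‖ut t θ‖^2 - ‖τ t θ‖ * ‖ut t θ‖
            = (r * ‖τ t θ‖ - ‖ut t θ‖)^2 / (2*r) := by
          field_simp
          ring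
        rw [he]
        positivity
      linarith
    rw [intervalIntegral.integral_add hint1 hint2,
        intervalIntegral.integral_const_mul, intervalIntegral.integral_const_mul] at key
    exact key
  -- bound the accumulated tension term
  have hτsub : ∀ a b : ℝ, -T ≤ a → a ≤ b → b ≤ T → IntervalIntegrable Kτ volume a b := by
    intro a b ha hab hb
    refine hτ2.mono_set ?_
    rw [Set.uIcc_of_le hab, Set.uIcc_of_le (by linarith)]
    exact Set.Icc_subset_Icc ha hb
  have hgterm : ∀ r : ℝ, 0 < r →
      |∫ t in (0:ℝ)..t₀, g t| ≤ (r/2) * A + (1/(2*r)) * (2*Eu) := by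
    intro r hr
    have hint1 : IntervalIntegrable (fun t => (r/2) * Kτ t) volume 0 t₀ :=
      (hτsub 0 t₀ (by linarith) ht₀.1 ht₀.2).const_mul _
    have hint2 : IntervalIntegrable (fun t => (1/(2*r)) * Kt t) volume 0 t₀ :=
      (hKtint 0 t₀).const_mul _
    have step1 : |∫ t in (0:ℝ)..t₀, g t|
        ≤ ∫ t in (0:ℝ)..t₀, ((r/2) * Kτ t + (1/(2*r)) * Kt t) := by
      apply aux_abs_int_13 ht₀.1 (hint1.add hint2)
      intro t _
      exact hgbound r hr t
    rw [intervalIntegral.integral_add hint1 hint2,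
        intervalIntegral.integral_const_mul, intervalIntegral.integral_const_mul] at step1
    have step2 : ∫ t in (0:ℝ)..t₀, Kτ t ≤ A :=
      aux_sub_int_13 (by linarith [ht₀.1]) ht₀.1 ht₀.2 hτ2 hKτnonneg
    have step3 : ∫ t in (0:ℝ)..t₀, Kt t ≤ 2*Eu := by
      have hle : ∫ t in (0:ℝ)..t₀, Kt t ≤ ∫ t in (-T)..T, Kt t :=
        aux_sub_int_13 (by linarith [ht₀.1]) ht₀.1 ht₀.2 (hKtint _ _)
          (fun t => intervalIntegral.integral_nonneg hπ (fun θ _ => by positivity))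
      have hle2 : ∫ t in (-T)..T, Kt t ≤ ∫ t in (-T)..T, K t := by
        apply intervalIntegral.integral_mono_on (by linarith) (hKtint _ _) (hKint _ _)
        intro t _
        apply intervalIntegral.integral_mono_on hπ
          (((hcθ1 t).norm.pow 2).intervalIntegrable 0 π)
          ((((hcθ1 t).norm.pow 2).add ((hcθ2 t).norm.pow 2)).intervalIntegrable 0 π)
        intro θ _
        show ‖ut t θ‖^2 ≤ ‖ut t θ‖^2 + ‖uθ t θ‖^2
        nlinarith [sq_nonneg ‖uθ t θ‖]
      linarith [h2Eu ▸ hle2]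
    have hr2 : (0:ℝ) ≤ r/2 := by positivity
    have hr3 : (0:ℝ) ≤ 1/(2*r) := by positivity
    calc |∫ t in (0:ℝ)..t₀, g t|
        ≤ ((r/2) * ∫ t in (0:ℝ)..t₀, Kτ t) + (1/(2*r)) * ∫ t in (0:ℝ)..t₀, Kt t := step1
      _ ≤ (r/2) * A + (1/(2*r)) * (2*Eu) :=
          add_le_add (mul_le_mul_of_nonneg_left step2 hr2)
            (mul_le_mul_of_nonneg_left step3 hr3)
  -- put everything together
  have hα₀ := hα t₀ ht₀'
  have hmain : ∀ r : ℝ, 0 < r → |α| - (2/T)*Eu ≤ r * A + (2*Eu) / r := by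
    intro r hr
    have h1 : |α| ≤ K t₀ + 2 * |∫ t in (0:ℝ)..t₀, g t| := by
      rw [hα₀]
      calc |(∫ θ in (0:ℝ)..π, (‖ut t₀ θ‖^2 - ‖uθ t₀ θ‖^2))
            - 2 * ∫ t in (0:ℝ)..t₀, g t|
          ≤ |∫ θ in (0:ℝ)..π, (‖ut t₀ θ‖^2 - ‖uθ t₀ θ‖^2)| + |2 * ∫ t in (0:ℝ)..t₀, g t| :=
            abs_sub _ _
        _ ≤ K t₀ + 2 * |∫ t in (0:ℝ)..t₀, g t| := by
            rw [abs_mul, abs_two]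
            linarith [hslice]
    have h2 := hgterm r hr
    have h3 : (2:ℝ)/T*Eu = 2*Eu/T := by ring
    have h4 : 2 * ((r/2) * A + (1/(2*r)) * (2*Eu)) = r * A + (2*Eu)/r := by
      field_simp
    nlinarith [hKt₀2]
  have := aux_opt_13 hA0 h2Eu0 hmain
  linarith
end
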